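/- Let X be an n×(k+1) matrix with full column rank. Appending a row v to X to form X' satisfies: the map v ↦ det(X'ᵀX') is maximized over a finite set S ⊆ ℝ^{k+1} at exactly those v ∈ S maximizing vᵀ(XᵀX)⁻¹v. -/

import Mathlib

open Matrix

/-- The matrix obtained by appending the row `v` to the `n × p` matrix `X`. -/
def appendRow {n p : ℕ} (X : Matrix (Fin n) (Fin p) ℝ) (v : Fin p → ℝ) :
    Matrix (Fin (n+1)) (Fin p) ℝ :=
  Matrix.of (Fin.snoc (fun i => X i) v)

lemma appendRow_mul (n k : ℕ) (X : Matrix (Fin n) (Fin (k+1)) ℝ) (w : Fin (k+1) → ℝ) :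
    (appendRow X w)ᵀ * appendRow X w = Xᵀ * X + vecMulVec w w := by
  ext i j
  simp only [Matrix.mul_apply, Matrix.add_apply, Matrix.transpose_apply, vecMulVec_apply,
    appendRow, Matrix.of_apply]
  rw [Fin.sum_univ_castSucc]
  simp [Fin.snoc_castSucc, Fin.snoc_last]

lemma posDef_gram (n k : ℕ) (X : Matrix (Fin n) (Fin (k+1)) ℝ)
    (hX : X.rank = k + 1) : (Xᵀ * X).PosDef := by
  have hps : (Xᵀ * X).PosSemidef := by
    simpa using Matrix.posSemidef_conjTranspose_mul_self X
  refine Matrix.PosDef.of_dotProduct_mulVec_pos hps.1 (fun x hx => ?_)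
  -- injectivity of mulVecLin
  have hker : LinearMap.ker X.mulVecLin = ⊥ := by
    have h1 := LinearMap.finrank_range_add_finrank_ker X.mulVecLin
    have h2 : Module.finrank ℝ (LinearMap.range X.mulVecLin) = k + 1 := hX
    have h3 : Module.finrank ℝ (Fin (k+1) → ℝ) = k + 1 := by simp
    have : Module.finrank ℝ (LinearMap.ker X.mulVecLin) = 0 := by omega
    exact Submodule.finrank_eq_zero.mp this
  have hXx : X *ᵥ x ≠ 0 := by
    intro h
    apply hx
    have : x ∈ LinearMap.ker X.mulVecLin := by simpa [Matrix.mulVecLin_apply] using h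
    simpa [hker] using this
  have : x ⬝ᵥ (Xᵀ * X) *ᵥ x = (X *ᵥ x) ⬝ᵥ (X *ᵥ x) := by
    rw [← Matrix.mulVec_mulVec, Matrix.dotProduct_mulVec, Matrix.vecMul_transpose]
  rw [star_trivial, this]
  obtain ⟨i, hi⟩ := Function.ne_iff.mp hXx
  exact Finset.sum_pos' (fun j _ => mul_self_nonneg _)
    ⟨i, Finset.mem_univ i, mul_self_pos.mpr hi⟩

theorem dopt_argmax_characterization (n k : ℕ) (X : Matrix (Fin n) (Fin (k+1)) ℝ)
    (hX : X.rank = k + 1) (S : Finset (Fin (k+1) → ℝ)) (hS : S.Nonempty)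
    (v : Fin (k+1) → ℝ) (hv : v ∈ S) :
    (∀ w ∈ S, ((appendRow X w)ᵀ * appendRow X w).det
        ≤ ((appendRow X v)ᵀ * appendRow X v).det)
      ↔ (∀ w ∈ S, w ⬝ᵥ ((Xᵀ * X)⁻¹ *ᵥ w) ≤ v ⬝ᵥ ((Xᵀ * X)⁻¹ *ᵥ v)) := by
  have hPD := posDef_gram n k X hX
  have hdet : 0 < (Xᵀ * X).det := hPD.det_pos
  have key : ∀ w : Fin (k+1) → ℝ, ((appendRow X w)ᵀ * appendRow X w).det
      = (Xᵀ * X).det * (1 + w ⬝ᵥ ((Xᵀ * X)⁻¹ *ᵥ w)) := by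
    intro w
    rw [appendRow_mul, vecMulVec_eq Unit, Matrix.det_add_replicateCol_mul_replicateRow hdet.ne'.isUnit]
    congr 1
    rw [Matrix.mul_assoc, ← Matrix.replicateCol_mulVec, det_unique]
    simp [Matrix.add_apply, Matrix.one_apply_eq]
  constructor <;> intro h w hw <;> have hw' := h w hw
  · rw [key, key] at hw'
    have := (mul_le_mul_iff_right₀ hdet).mp hw'
    linarith
  · rw [key, key]
    have : (1 : ℝ) + w ⬝ᵥ ((Xᵀ * X)⁻¹ *ᵥ w) ≤ 1 + v ⬝ᵥ ((Xᵀ * X)⁻¹ *ᵥ v) := by linarith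
    exact mul_le_mul_of_nonneg_left this hdet.le
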